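/- Let Σ̄ be a connected 2-dimensional complex over a bigraph Σ with a fixed base vertex B, and let π : Σ̃̄ → Σ̄ be the universal covering constructed from homotopy classes of walks starting at B. The fundamental group 𝔤 = 𝔤(Σ̄, B) acts on Σ̃̄ by [ω]·[ω_B] = [ωω_B] on vertices (and correspondingly on arrows and 2-cells); this action commutes with the structure maps of Σ̃̄ (source, target, degree, and boundary), so the quotient complex Σ̃̄/𝔤 is defined, and π induces an isomorphism of complexes between Σ̃̄/𝔤 and Σ̄. -/

import Mathlib

/-- A (directed) bigraph: vertices, arrows, source/target maps and a degree map
(`false` = solid arrow, `true` = dotted arrow). -/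
structure Bigraph where
  V : Type
  A : Type
  src : A → V
  tgt : A → V
  deg : A → Bool

namespace Bigraph

/-- Source map of the doubled bigraph `Σ̂` (arrows `Σ₁ ⊔ Σ₁⁻¹`):
`s(x⁻¹) = e(x)`. -/
def dsrc (S : Bigraph) : S.A ⊕ S.A → S.V
  | .inl a => S.src a
  | .inr a => S.tgt a

/-- Target map of the doubled bigraph `Σ̂`: `e(x⁻¹) = s(x)`. -/
def dtgt (S : Bigraph) : S.A ⊕ S.A → S.V
  | .inl a => S.tgt a
  | .inr a => S.src a

end Bigraph

/-- A walk from `X` to `Y` on the bigraph `S`: a composable sequence of arrows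
of the doubled bigraph `Σ̂` (read right-to-left, as compositions). -/
inductive Walk (S : Bigraph) (X : S.V) : S.V → Type
  | nil : Walk S X X
  | cons (x : S.A ⊕ S.A) (ω : Walk S X (S.dsrc x)) : Walk S X (S.dtgt x)

namespace Walk

variable {S : Bigraph}

/-- Composition `ωω'` of walks, defined when `s(ω) = e(ω')`. -/
def comp {X Y : S.V} : {Z : S.V} → Walk S Y Z → Walk S X Y → Walk S X Z
  | _, .nil, ω' => ω'
  | _, .cons x ω, ω' => .cons x (ω.comp ω')

/-- The walk `x x⁻¹` for an arrow `x` of the doubled bigraph. -/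
def retrace (S : Bigraph) (x : S.A ⊕ S.A) : Walk S (S.dtgt x) (S.dtgt x) :=
  match x with
  | .inl a => .cons (.inl a) (.cons (.inr a) .nil)
  | .inr a => .cons (.inr a) (.cons (.inl a) .nil)

/-- Transport a walk along an equality of its target. -/
def castTgt {X Y Y' : S.V} (h : Y = Y') (ω : Walk S X Y) : Walk S X Y' := h ▸ ω

end Walk

/-- A cyclic walk on `S`, together with its base vertex. -/
def CWalk (S : Bigraph) : Type := Σ X : S.V, Walk S X X

/-- One cyclic rotation `ω₁ω₂ ↦ ω₂ω₁` of a cyclic walk. -/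
def RotStep (S : Bigraph) (w w' : CWalk S) : Prop :=
  ∃ (X Y : S.V) (α : Walk S X Y) (β : Walk S Y X),
    w = ⟨X, β.comp α⟩ ∧ w' = ⟨Y, α.comp β⟩

/-- A 2-dimensional complex over the bigraph `S`: a set of 2-cells together with a
boundary map assigning to each 2-cell a cycle (given by a representative cyclic walk). -/
structure TwoComplex (S : Bigraph) where
  Cell : Type
  bdry : Cell → CWalk S

/-- `w` is a representative of the boundary cycle `∂(C)`, i.e. it is cyclically
equivalent to the chosen boundary walk of the 2-cell `C`. -/
def TwoComplex.IsBdry {S : Bigraph} (K : TwoComplex S) (C : K.Cell) (w : CWalk S) : Prop :=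
  Relation.EqvGen (RotStep S) (K.bdry C) w


/-- The homotopy relation on walks of `S` induced by the 2-complex `K`: the relation
generated by sequences of elementary homotopies (cancelling/inserting `x x⁻¹`, and
deleting/inserting a cyclic walk bounding a 2-cell). -/
inductive Homotopic {S : Bigraph} (K : TwoComplex S) :
    {X Y : S.V} → Walk S X Y → Walk S X Y → Prop
  | refl {X Y : S.V} (ω : Walk S X Y) : Homotopic K ω ω
  | trans {X Y : S.V} {ω₁ ω₂ ω₃ : Walk S X Y} :
      Homotopic K ω₁ ω₂ → Homotopic K ω₂ ω₃ → Homotopic K ω₁ ω₃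
  | cancel {X Z : S.V} (x : S.A ⊕ S.A) (ω₁ : Walk S (S.dtgt x) Z) (ω₂ : Walk S X (S.dtgt x)) :
      Homotopic K (ω₁.comp ((Walk.retrace S x).comp ω₂)) (ω₁.comp ω₂)
  | insert {X Z : S.V} (x : S.A ⊕ S.A) (ω₁ : Walk S (S.dtgt x) Z) (ω₂ : Walk S X (S.dtgt x)) :
      Homotopic K (ω₁.comp ω₂) (ω₁.comp ((Walk.retrace S x).comp ω₂))
  | cellDel {X Z W : S.V} (C : K.Cell) (ω : Walk S W W) (h : K.IsBdry C ⟨W, ω⟩)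
      (ω₁ : Walk S W Z) (ω₂ : Walk S X W) :
      Homotopic K (ω₁.comp (ω.comp ω₂)) (ω₁.comp ω₂)
  | cellIns {X Z W : S.V} (C : K.Cell) (ω : Walk S W W) (h : K.IsBdry C ⟨W, ω⟩)
      (ω₁ : Walk S W Z) (ω₂ : Walk S X W) :
      Homotopic K (ω₁.comp ω₂) (ω₁.comp (ω.comp ω₂))

theorem Walk.comp_assoc {S : Bigraph} {W X Y Z : S.V}
    (a : Walk S Y Z) (b : Walk S X Y) (c : Walk S W X) :
    (a.comp b).comp c = a.comp (b.comp c) := by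
  induction a with
  | nil => simp [Walk.comp]
  | cons x a ih => simp [Walk.comp, ih]

/-- Homotopy is compatible with composition on the left. -/
theorem Homotopic.compRight {S : Bigraph} {K : TwoComplex S} {X Y : S.V}
    {μ μ' : Walk S X Y} (h : Homotopic K μ μ') :
    ∀ {Z : S.V} (w : Walk S Y Z), Homotopic K (w.comp μ) (w.comp μ') := by
  induction h with
  | refl ω => exact fun w => .refl _
  | trans h₁ h₂ ih₁ ih₂ => exact fun w => .trans (ih₁ w) (ih₂ w)
  | cancel x ω₁ ω₂ =>
      intro Z w
      rw [← Walk.comp_assoc w ω₁ ((Walk.retrace S x).comp ω₂), ← Walk.comp_assoc w ω₁ ω₂]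
      exact .cancel x (w.comp ω₁) ω₂
  | insert x ω₁ ω₂ =>
      intro Z w
      rw [← Walk.comp_assoc w ω₁ ((Walk.retrace S x).comp ω₂), ← Walk.comp_assoc w ω₁ ω₂]
      exact .insert x (w.comp ω₁) ω₂
  | cellDel C ω hb ω₁ ω₂ =>
      intro Z w
      rw [← Walk.comp_assoc w ω₁ (ω.comp ω₂), ← Walk.comp_assoc w ω₁ ω₂]
      exact .cellDel C ω hb (w.comp ω₁) ω₂
  | cellIns C ω hb ω₁ ω₂ =>
      intro Z w
      rw [← Walk.comp_assoc w ω₁ (ω.comp ω₂), ← Walk.comp_assoc w ω₁ ω₂]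
      exact .cellIns C ω hb (w.comp ω₁) ω₂

/-- Homotopy is compatible with composition on the right. -/
theorem Homotopic.compLeft {S : Bigraph} {K : TwoComplex S} {Y Z : S.V}
    {μ μ' : Walk S Y Z} (h : Homotopic K μ μ') :
    ∀ {X : S.V} (w : Walk S X Y), Homotopic K (μ.comp w) (μ'.comp w) := by
  induction h with
  | refl ω => exact fun w => .refl _
  | trans h₁ h₂ ih₁ ih₂ => exact fun w => .trans (ih₁ w) (ih₂ w)
  | cancel x ω₁ ω₂ =>
      intro X w
      rw [Walk.comp_assoc ω₁ ((Walk.retrace S x).comp ω₂) w,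
        Walk.comp_assoc (Walk.retrace S x) ω₂ w, Walk.comp_assoc ω₁ ω₂ w]
      exact .cancel x ω₁ (ω₂.comp w)
  | insert x ω₁ ω₂ =>
      intro X w
      rw [Walk.comp_assoc ω₁ ((Walk.retrace S x).comp ω₂) w,
        Walk.comp_assoc (Walk.retrace S x) ω₂ w, Walk.comp_assoc ω₁ ω₂ w]
      exact .insert x ω₁ (ω₂.comp w)
  | cellDel C ω hb ω₁ ω₂ =>
      intro X w
      rw [Walk.comp_assoc ω₁ (ω.comp ω₂) w, Walk.comp_assoc ω ω₂ w,
        Walk.comp_assoc ω₁ ω₂ w]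
      exact .cellDel C ω hb ω₁ (ω₂.comp w)
  | cellIns C ω hb ω₁ ω₂ =>
      intro X w
      rw [Walk.comp_assoc ω₁ (ω.comp ω₂) w, Walk.comp_assoc ω ω₂ w,
        Walk.comp_assoc ω₁ ω₂ w]
      exact .cellIns C ω hb ω₁ (ω₂.comp w)

/-- The homotopy relation on walks from the base vertex `B` to `Y`. -/
def HRel {S : Bigraph} (K : TwoComplex S) (B Y : S.V) :
    Walk S B Y → Walk S B Y → Prop :=
  fun ω ω' => Homotopic K ω ω'

/-- The single-arrow walk. -/
def Walk.single (S : Bigraph) (x : S.A ⊕ S.A) : Walk S (S.dsrc x) (S.dtgt x) :=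
  .cons x .nil

/-- `[ω] ↦ [xω]`: extension of a homotopy class of walks from `B` by the arrow `x`. -/
def extendClass {S : Bigraph} (K : TwoComplex S) (B : S.V) (x : S.A) :
    Quot (HRel K B (S.src x)) → Quot (HRel K B (S.tgt x)) :=
  Quot.map (fun μ => (Walk.single S (.inl x)).comp μ) (fun _ _ h => h.compRight _)

/-- The underlying bigraph of the universal covering of the 2-complex `K` with base
vertex `B`: vertices are homotopy classes `[ω]` of walks starting at `B`, arrows are
pairs `([ω], x)` with `s(x) = e(ω)`, with source `[ω]`, target `[xω]`, and the degree
of `x`.  (The projection `π` sends `⟨Y, [ω]⟩` to `Y = e(ω)` and `⟨x, [ω]⟩` to `x`.) -/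
def UC {S : Bigraph} (K : TwoComplex S) (B : S.V) : Bigraph where
  V := Σ Y : S.V, Quot (HRel K B Y)
  A := Σ x : S.A, Quot (HRel K B (S.src x))
  src := fun a => ⟨S.src a.1, a.2⟩
  tgt := fun a => ⟨S.tgt a.1, extendClass K B a.1 a.2⟩
  deg := fun a => S.deg a.1

/-- The projection of the universal covering on walks, induced by
`π₀(⟨Y, [ω]⟩) = Y` and `π₁(⟨x, [ω]⟩) = x`. -/
def projW {S : Bigraph} (K : TwoComplex S) (B : S.V) {v : (UC K B).V} :
    {w : (UC K B).V} → Walk (UC K B) v w → Walk S v.1 w.1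
  | _, .nil => .nil
  | _, .cons (.inl a) ω => .cons (.inl a.1) (projW K B ω)
  | _, .cons (.inr a) ω => .cons (.inr a.1) (projW K B ω)

theorem projW_nil {S : Bigraph} (K : TwoComplex S) (B : S.V) {v : (UC K B).V} :
    projW K B (.nil : Walk (UC K B) v v) = .nil := rfl

theorem projW_cons_inl {S : Bigraph} (K : TwoComplex S) (B : S.V) {v : (UC K B).V}
    (a : (UC K B).A) (ω : Walk (UC K B) v ((UC K B).dsrc (Sum.inl a))) :
    projW K B (.cons (.inl a) ω) = .cons (.inl a.1) (projW K B ω) := rfl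

theorem projW_cons_inr {S : Bigraph} (K : TwoComplex S) (B : S.V) {v : (UC K B).V}
    (a : (UC K B).A) (ω : Walk (UC K B) v ((UC K B).dsrc (Sum.inr a))) :
    projW K B (.cons (.inr a) ω) = .cons (.inr a.1) (projW K B ω) := rfl

/-- The projection commutes with composition of walks. -/
theorem projW_comp {S : Bigraph} (K : TwoComplex S) (B : S.V)
    {u v w : (UC K B).V} (α : Walk (UC K B) v w) (β : Walk (UC K B) u v) :
    projW K B (α.comp β) = (projW K B α).comp (projW K B β) := by
  induction α with
  | nil => simp [Walk.comp, projW_nil]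
  | cons x α ih =>
      cases x with
      | inl a => simp [Walk.comp, projW_cons_inl, ih]; rfl
      | inr a => simp [Walk.comp, projW_cons_inr, ih]; rfl

/-- The projection of a cyclic walk of the covering. -/
def projCW {S : Bigraph} (K : TwoComplex S) (B : S.V) (w : CWalk (UC K B)) : CWalk S :=
  ⟨w.1.1, projW K B w.2⟩

/-- The projection commutes with cyclic rotation. -/
theorem projCW_rot {S : Bigraph} (K : TwoComplex S) (B : S.V)
    {w w' : CWalk (UC K B)} (h : RotStep (UC K B) w w') :
    RotStep S (projCW K B w) (projCW K B w') := by
  obtain ⟨X, Y, α, β, rfl, rfl⟩ := h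
  exact ⟨X.1, Y.1, projW K B α, projW K B β,
    congrArg (fun t => (⟨X.1, t⟩ : CWalk S)) (projW_comp K B β α),
    congrArg (fun t => (⟨Y.1, t⟩ : CWalk S)) (projW_comp K B α β)⟩

/-- The cycle `θ` of the covering projects to a representative of the boundary
cycle `∂(C)` of the base. -/
def liftedBdry {S : Bigraph} (K : TwoComplex S) (B : S.V) (C : K.Cell) :
    Quot (RotStep (UC K B)) → Prop :=
  Quot.lift (fun w => K.IsBdry C (projCW K B w)) (by
    intro a b h
    apply propext
    constructor
    · intro hb
      exact Relation.EqvGen.trans _ _ _ hb (Relation.EqvGen.rel _ _ (projCW_rot K B h))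
    · intro hb
      exact Relation.EqvGen.trans _ _ _ hb
        (Relation.EqvGen.symm _ _ (Relation.EqvGen.rel _ _ (projCW_rot K B h))))

/-- The 2-cells of the universal covering: pairs `C̃_θ = (C, θ)` of a 2-cell `C` of the
base and a cycle `θ` of the covering projecting to `∂(C)`; here `∂(C̃_θ) = θ` and
`π₂(C̃_θ) = C`. -/
def UCCell {S : Bigraph} (K : TwoComplex S) (B : S.V) : Type :=
  Σ C : K.Cell, { θ : Quot (RotStep (UC K B)) // liftedBdry K B C θ }

/-- The vertex `A` occurs on the walk `ω` (is incident to `ω`). -/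
def Walk.memV {S : Bigraph} (A : S.V) : {X Y : S.V} → Walk S X Y → Prop
  | X, _, .nil => A = X
  | _, _, .cons x ω => A = S.dtgt x ∨ Walk.memV A ω

/-- Right multiplication `[ω]·[ω_B] = [ωω_B]` of a homotopy class of walks starting
at the base vertex `B` by an element of the fundamental group `𝔤(Σ̄, B)`. -/
def cmul {S : Bigraph} (K : TwoComplex S) (B : S.V) {Y : S.V}
    (q : Quot (HRel K B Y)) (g : Quot (HRel K B B)) : Quot (HRel K B Y) :=
  Quot.lift
    (fun ωB => Quot.map (fun ω => ω.comp ωB) (fun _ _ h => h.compLeft ωB) q)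
    (fun a b hab => by
      induction q using Quot.ind with
      | _ ω => exact Quot.sound (hab.compRight ω))
    g

/-- The action of the fundamental group `𝔤(Σ̄, B)` on the vertices of the universal
covering: `[ω]·[ω_B] = [ωω_B]`. -/
def actV {S : Bigraph} (K : TwoComplex S) (B : S.V)
    (g : Quot (HRel K B B)) (v : (UC K B).V) : (UC K B).V :=
  ⟨v.1, cmul K B v.2 g⟩

/-- The induced action of the fundamental group on the arrows of the universal
covering: `([ω], x)·[ω_B] = ([ωω_B], x)`. -/
def actA {S : Bigraph} (K : TwoComplex S) (B : S.V)
    (g : Quot (HRel K B B)) (a : (UC K B).A) : (UC K B).A :=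
  ⟨a.1, cmul K B a.2 g⟩

theorem extend_cmul {S : Bigraph} (K : TwoComplex S) (B : S.V) (x : S.A)
    (q : Quot (HRel K B (S.src x))) (g : Quot (HRel K B B)) :
    extendClass K B x (cmul K B q g) = cmul K B (extendClass K B x q) g := by
  induction q using Quot.ind with
  | _ μ =>
    induction g using Quot.ind with
    | _ ωB => exact congrArg (Quot.mk _) (Walk.comp_assoc _ _ _).symm

theorem act_tgt {S : Bigraph} (K : TwoComplex S) (B : S.V)
    (g : Quot (HRel K B B)) (a : (UC K B).A) :
    (UC K B).tgt (actA K B g a) = actV K B g ((UC K B).tgt a) :=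
  congrArg (fun t => (⟨S.tgt a.1, t⟩ : (UC K B).V)) (extend_cmul K B a.1 a.2 g)

/-- The induced action of the fundamental group on the walks of the universal
covering. -/
def actW {S : Bigraph} (K : TwoComplex S) (B : S.V) (g : Quot (HRel K B B))
    {v : (UC K B).V} : {w : (UC K B).V} → Walk (UC K B) v w →
      Walk (UC K B) (actV K B g v) (actV K B g w)
  | _, .nil => .nil
  | _, .cons (.inl a) ω =>
      Walk.castTgt (act_tgt K B g a)
        (.cons (.inl (actA K B g a)) (actW K B g ω))
  | _, .cons (.inr a) ω =>
      .cons (.inr (actA K B g a))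
        (Walk.castTgt (act_tgt K B g a).symm (actW K B g ω))

section Aux

variable {S : Bigraph}

theorem Walk.nil_comp {X Y : S.V} (ω : Walk S X Y) :
    (Walk.nil : Walk S Y Y).comp ω = ω := by simp [Walk.comp]

theorem Walk.cons_comp {X Y : S.V} (x : S.A ⊕ S.A) (ω : Walk S Y (S.dsrc x))
    (ω' : Walk S X Y) :
    (Walk.cons x ω).comp ω' = Walk.cons x (ω.comp ω') := by simp [Walk.comp]

theorem Walk.castTgt_self {X Y : S.V} (h : Y = Y) (ω : Walk S X Y) :
    Walk.castTgt h ω = ω := rfl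

theorem Walk.castTgt_comp {X Y Z Z' : S.V} (h : Z = Z')
    (ω : Walk S Y Z) (ω' : Walk S X Y) :
    (Walk.castTgt h ω).comp ω' = Walk.castTgt h (ω.comp ω') := by
  cases h; rfl

/-- Formal inverse of a walk. -/
def Walk.winv : {X Y : S.V} → Walk S X Y → Walk S Y X
  | _, _, .nil => .nil
  | _, _, .cons x ω => (Walk.winv ω).comp
      (match x with
        | .inl a => (Walk.cons (.inr a) .nil : Walk S (S.dtgt (Sum.inl a)) (S.dsrc (Sum.inl a)))
        | .inr a => (Walk.cons (.inl a) .nil : Walk S (S.dtgt (Sum.inr a)) (S.dsrc (Sum.inr a))))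

theorem Walk.winv_nil {X : S.V} : (Walk.nil : Walk S X X).winv = .nil := by
  simp [Walk.winv]

theorem Walk.winv_cons_inl {X : S.V} (a : S.A) (ω : Walk S X (S.dsrc (Sum.inl a))) :
    (Walk.cons (.inl a) ω).winv = (Walk.winv ω).comp (.cons (.inr a) .nil) := by
  simp [Walk.winv]; rfl

theorem Walk.winv_cons_inr {X : S.V} (a : S.A) (ω : Walk S X (S.dsrc (Sum.inr a))) :
    (Walk.cons (.inr a) ω).winv = (Walk.winv ω).comp (.cons (.inl a) .nil) := by
  simp [Walk.winv]; rfl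

theorem cancel_left {K : TwoComplex S} :
    ∀ {X Y : S.V} (σ : Walk S X Y) {W : S.V} (ω : Walk S W Y),
      Homotopic K (σ.comp ((Walk.winv σ).comp ω)) ω := by
  intro X Y σ
  induction σ with
  | nil => intro W ω; rw [Walk.winv_nil, Walk.nil_comp, Walk.nil_comp]; exact .refl ω
  | cons x σ ih =>
    cases x with
    | inl a =>
      intro W ω
      have h1 := (ih (W := W) ((Walk.cons (.inr a) Walk.nil).comp ω)).compRight
        (Walk.single S (.inl a))
      have h2 := Homotopic.cancel (K := K) (.inl a) .nil ω
      simp only [Walk.nil_comp, Walk.retrace, Walk.cons_comp] at h2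
      simp only [Walk.single, Walk.cons_comp, Walk.nil_comp] at h1
      rw [Walk.winv_cons_inl]
      simp only [Walk.cons_comp, Walk.comp_assoc, Walk.nil_comp]
      erw [Walk.comp_assoc]
      exact .trans h1 h2
    | inr a =>
      intro W ω
      have h1 := (ih (W := W) ((Walk.cons (.inl a) Walk.nil).comp ω)).compRight
        (Walk.single S (.inr a))
      have h2 := Homotopic.cancel (K := K) (.inr a) .nil ω
      simp only [Walk.nil_comp, Walk.retrace, Walk.cons_comp] at h2
      simp only [Walk.single, Walk.cons_comp, Walk.nil_comp] at h1
      rw [Walk.winv_cons_inr]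
      simp only [Walk.cons_comp, Walk.comp_assoc, Walk.nil_comp]
      erw [Walk.comp_assoc]
      exact .trans h1 h2

variable (K : TwoComplex S) (B : S.V)

/-- `[μ] ↦ [ωμ]` for a fixed walk `ω`. -/
def qext {X Y : S.V} (ω : Walk S X Y) :
    Quot (HRel K B X) → Quot (HRel K B Y) :=
  Quot.map ω.comp (fun _ _ h => h.compRight ω)

theorem qext_mk {X Y : S.V} (ω : Walk S X Y) (μ : Walk S B X) :
    qext K B ω (Quot.mk _ μ) = Quot.mk _ (ω.comp μ) := rfl

theorem qext_nil {X : S.V} (q : Quot (HRel K B X)) :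
    qext K B (Walk.nil) q = q := by
  induction q using Quot.ind with
  | _ μ => rw [qext_mk, Walk.nil_comp]

theorem qext_comp {X Y Z : S.V} (ω : Walk S Y Z) (ω' : Walk S X Y)
    (q : Quot (HRel K B X)) :
    qext K B (ω.comp ω') q = qext K B ω (qext K B ω' q) := by
  induction q using Quot.ind with
  | _ μ => rw [qext_mk, qext_mk, qext_mk, Walk.comp_assoc]

theorem extendClass_mk (a : S.A) (μ : Walk S B (S.src a)) :
    extendClass K B a (Quot.mk _ μ) = Quot.mk _ (Walk.cons (.inl a) μ) := by
  show Quot.mk _ ((Walk.single S (.inl a)).comp μ) = _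
  erw [Walk.single, Walk.cons_comp, Walk.nil_comp]

theorem extend_qext {X : S.V} (a : S.A) (ω : Walk S X (S.src a))
    (q : Quot (HRel K B X)) :
    extendClass K B a (qext K B ω q) = qext K B (Walk.cons (.inl a) ω) q := by
  induction q using Quot.ind with
  | _ μ =>
    erw [qext_mk, extendClass_mk, qext_mk, Walk.cons_comp]
    rfl

theorem ext_inv {X : S.V} (a : S.A) (ω : Walk S X (S.tgt a))
    (q : Quot (HRel K B X)) :
    extendClass K B a (qext K B (Walk.cons (.inr a) ω) q) = qext K B ω q := by
  induction q using Quot.ind with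
  | _ μ =>
    erw [qext_mk, extendClass_mk, qext_mk, Walk.cons_comp]
    apply Quot.sound
    have h := Homotopic.cancel (K := K) (.inl a) .nil (ω.comp μ)
    erw [Walk.nil_comp, Walk.nil_comp, Walk.retrace, Walk.cons_comp,
      Walk.cons_comp, Walk.nil_comp] at h
    exact h

theorem extendClass_inj (a : S.A) {q q' : Quot (HRel K B (S.src a))}
    (h : extendClass K B a q = extendClass K B a q') : q = q' := by
  have h2 := congrArg (qext K B (Walk.single S (.inr a))) h
  induction q using Quot.ind with
  | _ μ =>
    induction q' using Quot.ind with
    | _ μ' =>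
      have key : ∀ ν : Walk S B (S.src a),
          qext K B (Walk.single S (.inr a)) (extendClass K B a (Quot.mk _ ν)) =
            Quot.mk _ ν := by
        intro ν
        show Quot.mk (HRel K B (S.src a))
            ((Walk.single S (.inr a)).comp ((Walk.single S (.inl a)).comp ν)) =
          Quot.mk (HRel K B (S.src a)) ν
        simp only [Walk.single, Walk.cons_comp, Walk.nil_comp]
        apply Quot.sound
        have h := Homotopic.cancel (K := K) (.inr a) .nil ν
        simp only [Walk.nil_comp, Walk.retrace, Walk.cons_comp] at h
        exact h
      rw [key, key] at h2
      exact h2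

end Aux

section Aux2

variable {S : Bigraph} (K : TwoComplex S) (B : S.V)

/-- An arrow of the universal covering. -/
def UCarr (a : S.A) (q : Quot (HRel K B (S.src a))) : (UC K B).A := ⟨a, q⟩

/-- The lift of a walk of the base to the universal covering, starting at a
given homotopy class. -/
noncomputable def liftW {X : S.V} : {Y : S.V} → (ω : Walk S X Y) →
    (q : Quot (HRel K B X)) → Walk (UC K B) ⟨X, q⟩ ⟨Y, qext K B ω q⟩ :=
  Walk.rec
    (motive := fun Y ω => (q : Quot (HRel K B X)) →
      Walk (UC K B) ⟨X, q⟩ ⟨Y, qext K B ω q⟩)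
    (fun q => Walk.castTgt
      (congrArg (fun t => (⟨X, t⟩ : (UC K B).V)) (qext_nil K B q).symm) .nil)
    (fun x ω ih =>
      (match x, ω, ih with
        | .inl a, ω, ih => fun q =>
            Walk.castTgt
              (congrArg (fun t => (⟨S.tgt a, t⟩ : (UC K B).V))
                (extend_qext K B a ω q))
              (Walk.cons (Sum.inl (UCarr K B a (qext K B ω q))) (ih q))
        | .inr a, ω, ih => fun q =>
            Walk.cons
              (Sum.inr (UCarr K B a (qext K B (Walk.cons (.inr a) ω) q)))
              (Walk.castTgt
                (congrArg (fun t => (⟨S.tgt a, t⟩ : (UC K B).V))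
                  (ext_inv K B a ω q).symm)
                (ih q)) :
        (q : Quot (HRel K B X)) →
          Walk (UC K B) ⟨X, q⟩ ⟨S.dtgt x, qext K B (Walk.cons x ω) q⟩))

theorem liftW_nil {X : S.V} (q : Quot (HRel K B X)) :
    liftW K B (Walk.nil) q = Walk.castTgt
      (congrArg (fun t => (⟨X, t⟩ : (UC K B).V)) (qext_nil K B q).symm) .nil := rfl

theorem liftW_cons_inl {X : S.V} (a : S.A) (ω : Walk S X (S.dsrc (Sum.inl a)))
    (q : Quot (HRel K B X)) :
    liftW K B (Walk.cons (.inl a) ω) q = Walk.castTgt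
      (congrArg (fun t => (⟨S.tgt a, t⟩ : (UC K B).V)) (extend_qext K B a ω q))
      (Walk.cons (Sum.inl (UCarr K B a (qext K B ω q))) (liftW K B ω q)) := rfl

theorem liftW_cons_inr {X : S.V} (a : S.A) (ω : Walk S X (S.dsrc (Sum.inr a)))
    (q : Quot (HRel K B X)) :
    liftW K B (Walk.cons (.inr a) ω) q = Walk.cons
      (Sum.inr (UCarr K B a (qext K B (Walk.cons (.inr a) ω) q)))
      (Walk.castTgt
        (congrArg (fun t => (⟨S.tgt a, t⟩ : (UC K B).V))
          (ext_inv K B a ω q).symm)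
        (liftW K B ω q)) := rfl

theorem projW_castTgt {v w w' : (UC K B).V} (h : w = w') (ω : Walk (UC K B) v w) :
    projW K B (Walk.castTgt h ω) =
      Walk.castTgt (congrArg Sigma.fst h) (projW K B ω) := by
  cases h; rfl

theorem projW_liftW : ∀ {X Y : S.V} (ω : Walk S X Y) (q : Quot (HRel K B X)),
    projW K B (liftW K B ω q) = ω := by
  intro X Y ω
  induction ω with
  | nil =>
    intro q
    erw [liftW_nil, projW_castTgt, Walk.castTgt_self]
    rfl
  | cons x ω ih =>
    intro q
    cases x with
    | inl a =>
      erw [liftW_cons_inl, projW_castTgt, Walk.castTgt_self, projW_cons_inl, ih]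
      rfl
    | inr a =>
      erw [liftW_cons_inr, projW_cons_inr, projW_castTgt, Walk.castTgt_self, ih]
      rfl

/-- First arrow of a walk, as an element of `Option`. -/
def headArr {X : S.V} : (Σ Y : S.V, Walk S X Y) → Option (S.A ⊕ S.A)
  | ⟨_, .nil⟩ => none
  | ⟨_, .cons y _⟩ => some y

/-- Remove the first arrow of a walk. -/
def tailW {X : S.V} : (Σ Y : S.V, Walk S X Y) → Σ Y : S.V, Walk S X Y
  | ⟨_, .nil⟩ => ⟨X, .nil⟩
  | ⟨_, .cons y ρ⟩ => ⟨S.dsrc y, ρ⟩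

theorem UCA_ext_src (a a' : (UC K B).A) (h1 : a.1 = a'.1)
    (h2 : (UC K B).src a = (UC K B).src a') : a = a' := by
  obtain ⟨x, q⟩ := a
  obtain ⟨x', q'⟩ := a'
  cases h1
  injection h2 with e1 e2
  exact congrArg (Sigma.mk x) e2

theorem UCA_ext_tgt (a a' : (UC K B).A) (h1 : a.1 = a'.1)
    (h2 : (UC K B).tgt a = (UC K B).tgt a') : a = a' := by
  obtain ⟨x, q⟩ := a
  obtain ⟨x', q'⟩ := a'
  cases h1
  injection h2 with e1 e2
  exact congrArg (Sigma.mk x) (extendClass_inj K B x e2)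

theorem projW_inj : ∀ {v u : (UC K B).V} (Θ : Walk (UC K B) v u)
    {u' : (UC K B).V} (Θ' : Walk (UC K B) v u'),
    (⟨u.1, projW K B Θ⟩ : Σ Y, Walk S v.1 Y) = ⟨u'.1, projW K B Θ'⟩ →
    (⟨u, Θ⟩ : Σ w, Walk (UC K B) v w) = ⟨u', Θ'⟩ := by
  intro v u Θ
  induction Θ with
  | nil =>
    intro u' Θ' h
    cases Θ' with
    | nil => rfl
    | cons x' Θ' =>
      cases x' with
      | inl a' =>
        have hhead : (none : Option (S.A ⊕ S.A)) = some (Sum.inl a'.1) :=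
          congrArg headArr h
        nomatch hhead
      | inr a' =>
        have hhead : (none : Option (S.A ⊕ S.A)) = some (Sum.inr a'.1) :=
          congrArg headArr h
        nomatch hhead
  | cons x Θ ih =>
    intro u' Θ' h
    cases Θ' with
    | nil =>
      cases x with
      | inl a =>
        have hhead : some (Sum.inl a.1) = (none : Option (S.A ⊕ S.A)) :=
          congrArg headArr h
        nomatch hhead
      | inr a =>
        have hhead : some (Sum.inr a.1) = (none : Option (S.A ⊕ S.A)) :=
          congrArg headArr h
        nomatch hhead
    | cons x' Θ' =>
      cases x with
      | inl a =>
        cases x' with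
        | inr a' =>
          have hhead : (some (Sum.inl a.1) : Option (S.A ⊕ S.A)) =
              some (Sum.inr a'.1) := congrArg headArr h
          simp at hhead
        | inl a' =>
          have hhead : (some (Sum.inl a.1) : Option (S.A ⊕ S.A)) =
              some (Sum.inl a'.1) := congrArg headArr h
          simp only [Option.some.injEq, Sum.inl.injEq] at hhead
          have htail : (⟨((UC K B).dsrc (Sum.inl a)).1, projW K B Θ⟩ :
              Σ Y, Walk S v.1 Y) = ⟨((UC K B).dsrc (Sum.inl a')).1, projW K B Θ'⟩ :=
            congrArg tailW h
          have hs := ih Θ' htail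
          have ha : a = a' :=
            UCA_ext_src K B a a' hhead (congrArg Sigma.fst hs)
          cases ha
          injection hs with e1 e2
          first | rw [eq_of_heq e2] | rw [e2]
      | inr a =>
        cases x' with
        | inl a' =>
          have hhead : (some (Sum.inr a.1) : Option (S.A ⊕ S.A)) =
              some (Sum.inl a'.1) := congrArg headArr h
          simp at hhead
        | inr a' =>
          have hhead : (some (Sum.inr a.1) : Option (S.A ⊕ S.A)) =
              some (Sum.inr a'.1) := congrArg headArr h
          simp only [Option.some.injEq, Sum.inr.injEq] at hhead
          have htail : (⟨((UC K B).dsrc (Sum.inr a)).1, projW K B Θ⟩ :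
              Σ Y, Walk S v.1 Y) = ⟨((UC K B).dsrc (Sum.inr a')).1, projW K B Θ'⟩ :=
            congrArg tailW h
          have hs := ih Θ' htail
          have ha : a = a' :=
            UCA_ext_tgt K B a a' hhead (congrArg Sigma.fst hs)
          cases ha
          injection hs with e1 e2
          first | rw [eq_of_heq e2] | rw [e2]

theorem walk_end {v u : (UC K B).V} (Θ : Walk (UC K B) v u) :
    u = ⟨u.1, qext K B (projW K B Θ) v.2⟩ := by
  have h := projW_inj K B Θ (liftW K B (projW K B Θ) v.2)
    (congrArg (fun t => (⟨u.1, t⟩ : Σ Y, Walk S v.1 Y))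
      (projW_liftW K B (projW K B Θ) v.2).symm)
  exact congrArg Sigma.fst h

end Aux2

section Aux3

variable {S : Bigraph} (K : TwoComplex S) (B : S.V)

theorem actW_nil (g : Quot (HRel K B B)) (v : (UC K B).V) :
    actW K B g (.nil : Walk (UC K B) v v) = .nil := by
  rfl

theorem actW_cons_inl (g : Quot (HRel K B B)) {v : (UC K B).V}
    (a : (UC K B).A) (ω : Walk (UC K B) v ((UC K B).dsrc (Sum.inl a))) :
    actW K B g (.cons (.inl a) ω) =
      Walk.castTgt (act_tgt K B g a) (.cons (.inl (actA K B g a)) (actW K B g ω)) := by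
  rfl

theorem actW_cons_inr (g : Quot (HRel K B B)) {v : (UC K B).V}
    (a : (UC K B).A) (ω : Walk (UC K B) v ((UC K B).dsrc (Sum.inr a))) :
    actW K B g (.cons (.inr a) ω) =
      Walk.cons (Sum.inr (actA K B g a))
        (Walk.castTgt (act_tgt K B g a).symm (actW K B g ω)) := by
  rfl

theorem actW_comp (g : Quot (HRel K B B)) :
    ∀ {u v w : (UC K B).V} (α : Walk (UC K B) v w) (β : Walk (UC K B) u v),
      actW K B g (α.comp β) = (actW K B g α).comp (actW K B g β) := by
  intro u v w α
  induction α with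
  | nil =>
    intro β
    rw [Walk.nil_comp, actW_nil, Walk.nil_comp]
  | cons x α ih =>
    intro β
    cases x with
    | inl a =>
      erw [Walk.cons_comp, actW_cons_inl, actW_cons_inl, Walk.castTgt_comp,
        Walk.cons_comp, ih]
      rfl
    | inr a =>
      erw [Walk.cons_comp, actW_cons_inr, actW_cons_inr, Walk.cons_comp,
        Walk.castTgt_comp, ih]
      rfl

theorem projW_actW (g : Quot (HRel K B B)) :
    ∀ {v w : (UC K B).V} (θ : Walk (UC K B) v w),
      projW K B (actW K B g θ) = projW K B θ := by
  intro v w θ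
  induction θ with
  | nil => rw [actW_nil]; rfl
  | cons x θ ih =>
    cases x with
    | inl a =>
      erw [actW_cons_inl, projW_castTgt, Walk.castTgt_self, projW_cons_inl, ih]
      rfl
    | inr a =>
      erw [actW_cons_inr, projW_cons_inr, projW_castTgt, Walk.castTgt_self, ih]
      rfl

/-- The action of the fundamental group on cyclic walks of the covering. -/
def actCW (g : Quot (HRel K B B)) (w : CWalk (UC K B)) : CWalk (UC K B) :=
  ⟨actV K B g w.1, actW K B g w.2⟩

theorem actCW_rot (g : Quot (HRel K B B)) {w w' : CWalk (UC K B)}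
    (h : RotStep (UC K B) w w') :
    RotStep (UC K B) (actCW K B g w) (actCW K B g w') := by
  obtain ⟨X, Y, α, β, rfl, rfl⟩ := h
  exact ⟨actV K B g X, actV K B g Y, actW K B g α, actW K B g β,
    congrArg (fun t => (⟨actV K B g X, t⟩ : CWalk (UC K B))) (actW_comp K B g β α),
    congrArg (fun t => (⟨actV K B g Y, t⟩ : CWalk (UC K B))) (actW_comp K B g α β)⟩

/-- The action of the fundamental group on cycles of the covering. -/
def actQ (g : Quot (HRel K B B)) :
    Quot (RotStep (UC K B)) → Quot (RotStep (UC K B)) :=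
  Quot.map (actCW K B g) (fun _ _ h => actCW_rot K B g h)

theorem projCW_actCW (g : Quot (HRel K B B)) (w : CWalk (UC K B)) :
    projCW K B (actCW K B g w) = projCW K B w := by
  obtain ⟨v, θ⟩ := w
  exact congrArg (fun t => (⟨v.1, t⟩ : CWalk S)) (projW_actW K B g θ)

theorem liftedBdry_act (C : K.Cell) (g : Quot (HRel K B B))
    (θ : Quot (RotStep (UC K B))) (h : liftedBdry K B C θ) :
    liftedBdry K B C (actQ K B g θ) := by
  induction θ using Quot.ind with
  | _ w =>
    show K.IsBdry C (projCW K B (actCW K B g w))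
    rw [projCW_actCW]
    exact h

/-- The action of the fundamental group on the 2-cells of the covering. -/
def actCell (g : Quot (HRel K B B)) (c : UCCell K B) : UCCell K B :=
  ⟨c.1, ⟨actQ K B g c.2.1, liftedBdry_act K B c.1 g c.2.1 c.2.2⟩⟩

theorem rotStep_symm {w w' : CWalk S} (h : RotStep S w w') : RotStep S w' w := by
  obtain ⟨X, Y, α, β, h1, h2⟩ := h
  exact ⟨Y, X, β, α, h2, h1⟩

theorem eqvGen_rts {α : Type*} {r : α → α → Prop} (hs : ∀ {a b}, r a b → r b a)
    {a b : α} (h : Relation.EqvGen r a b) : Relation.ReflTransGen r a b := by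
  induction h with
  | rel a b hr => exact Relation.ReflTransGen.single hr
  | refl a => exact Relation.ReflTransGen.refl
  | symm a b _ ih =>
    exact (@Relation.ReflTransGen.stdSymm _ _ ⟨fun x y hxy => hs hxy⟩).symm _ _ ih
  | trans a b c _ _ ih1 ih2 => exact ih1.trans ih2

theorem rot_lift (w : CWalk (UC K B)) (z : CWalk S)
    (h : RotStep S (projCW K B w) z) :
    ∃ w' : CWalk (UC K B), RotStep (UC K B) w w' ∧ projCW K B w' = z := by
  obtain ⟨v, θ⟩ := w
  obtain ⟨X, Y, α, β, h1, h2⟩ := h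
  injection h1 with hX hw
  subst hX
  subst h2
  have hw' : projW K B θ = β.comp α := eq_of_heq hw
  have hend := walk_end K B θ
  rw [hw', qext_comp] at hend
  let m : (UC K B).V := ⟨Y, qext K B α v.2⟩
  let A : Walk (UC K B) v m := liftW K B α v.2
  let Bw : Walk (UC K B) m v :=
    Walk.castTgt hend.symm (liftW K B β (qext K B α v.2))
  have hBw : projW K B Bw = β := by
    show projW K B (Walk.castTgt hend.symm (liftW K B β (qext K B α v.2))) = β
    erw [projW_castTgt, Walk.castTgt_self, projW_liftW]
  have hA : projW K B A = α := projW_liftW K B α v.2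
  have hproj : projW K B (Bw.comp A) = projW K B θ := by
    rw [projW_comp, hBw, hA, hw']
  have hs := projW_inj K B θ (Bw.comp A)
    (congrArg (fun t => (⟨v.1, t⟩ : Σ Z, Walk S v.1 Z)) hproj.symm)
  have hθ : θ = Bw.comp A := by
    injection hs with e1 e2 <;> first | exact eq_of_heq e2 | exact e2
  refine ⟨⟨m, A.comp Bw⟩,
    ⟨v, m, A, Bw, congrArg (fun t => (⟨v, t⟩ : CWalk (UC K B))) hθ, rfl⟩, ?_⟩
  show (⟨Y, projW K B (A.comp Bw)⟩ : CWalk S) = ⟨Y, α.comp β⟩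
  rw [projW_comp, hBw, hA]

theorem chain_lift (w : CWalk (UC K B)) (z : CWalk S)
    (h : Relation.ReflTransGen (RotStep S) (projCW K B w) z) :
    ∃ w', Relation.EqvGen (RotStep (UC K B)) w w' ∧ projCW K B w' = z := by
  induction h with
  | refl => exact ⟨w, Relation.EqvGen.refl w, rfl⟩
  | tail hxy hstep ih =>
    obtain ⟨w', hww', hproj⟩ := ih
    obtain ⟨w'', hstep', hproj'⟩ := rot_lift K B w' _ (by rw [hproj]; exact hstep)
    exact ⟨w'', Relation.EqvGen.trans _ _ _ hww'
      (Relation.EqvGen.rel _ _ hstep'), hproj'⟩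

theorem cwalk_ext (w w' : CWalk (UC K B)) (h1 : w.1 = w'.1)
    (h2 : projCW K B w = projCW K B w') : w = w' := by
  obtain ⟨v, θ⟩ := w
  obtain ⟨v', θ'⟩ := w'
  cases h1
  injection h2 with e1 e2
  have hp : projW K B θ = projW K B θ' := by
    first | exact eq_of_heq e2 | exact e2
  have h3 := projW_inj K B θ θ'
    (congrArg (fun t => (⟨v.1, t⟩ : Σ Y, Walk S v.1 Y)) hp)
  injection h3 with e3 e4 <;> first | rw [eq_of_heq e4] | rw [e4]

theorem qext_bdry (C : K.Cell) (q : Quot (HRel K B (K.bdry C).1)) :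
    qext K B (K.bdry C).2 q = q := by
  induction q using Quot.ind with
  | _ μ =>
    apply Quot.sound
    have h := Homotopic.cellDel (C := C) (K.bdry C).2
      (Relation.EqvGen.refl (K.bdry C)) .nil μ
    simp only [Walk.nil_comp] at h
    exact h

variable (σ : ∀ Y : S.V, Walk S B Y)

/-- The standard lift of the boundary cycle of a 2-cell. -/
noncomputable def stdTheta (C : K.Cell) :
    Walk (UC K B) ⟨(K.bdry C).1, Quot.mk _ (σ (K.bdry C).1)⟩
      ⟨(K.bdry C).1, Quot.mk _ (σ (K.bdry C).1)⟩ :=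
  Walk.castTgt
    (congrArg (fun t => (⟨(K.bdry C).1, t⟩ : (UC K B).V))
      (qext_bdry K B C (Quot.mk _ (σ (K.bdry C).1))))
    (liftW K B (K.bdry C).2 (Quot.mk _ (σ (K.bdry C).1)))

/-- The standard lift of the boundary cycle, as a cyclic walk. -/
noncomputable def stdCW (C : K.Cell) : CWalk (UC K B) :=
  ⟨⟨(K.bdry C).1, Quot.mk _ (σ (K.bdry C).1)⟩, stdTheta K B σ C⟩

theorem stdTheta_proj (C : K.Cell) :
    projW K B (stdTheta K B σ C) = (K.bdry C).2 := by
  simp only [stdTheta]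
  erw [projW_castTgt, Walk.castTgt_self, projW_liftW]

theorem std_lifted (C : K.Cell) :
    liftedBdry K B C (Quot.mk _ (stdCW K B σ C)) := by
  show Relation.EqvGen (RotStep S) (K.bdry C)
    ⟨(K.bdry C).1, projW K B (stdTheta K B σ C)⟩
  rw [stdTheta_proj]
  exact Relation.EqvGen.refl _

/-- The standard lift of a 2-cell of the base. -/
noncomputable def stdCell (C : K.Cell) : UCCell K B :=
  ⟨C, ⟨Quot.mk _ (stdCW K B σ C), std_lifted K B σ C⟩⟩

end Aux3

/-- The fundamental group `𝔤 = 𝔤(Σ̄, B)` acts on the universal covering `Σ̃̄` by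
`[ω]·[ω_B] = [ωω_B]` on vertices (and correspondingly on arrows and 2-cells); the
action commutes with the structure maps (source, target, degree and boundary), the
quotient complex `Σ̃̄/𝔤` is defined, and the projection `π` induces an isomorphism of
complexes between `Σ̃̄/𝔤` and `Σ̄`. -/
theorem stmt_9 {S : Bigraph} (K : TwoComplex S)
    (hconn : ∀ X Y : S.V, Nonempty (Walk S X Y)) (B : S.V) :
    -- the action on vertices is `[ω]·[ω_B] = [ωω_B]`, and it is an action
    (∀ (Y : S.V) (ω : Walk S B Y) (ωB : Walk S B B),
        actV K B (Quot.mk _ ωB) ⟨Y, Quot.mk _ ω⟩ = ⟨Y, Quot.mk _ (ω.comp ωB)⟩) ∧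
    (∀ (ωB ωB' : Walk S B B) (v : (UC K B).V),
        actV K B (Quot.mk _ ωB') (actV K B (Quot.mk _ ωB) v) =
          actV K B (Quot.mk _ (ωB.comp ωB')) v) ∧
    -- the action commutes with the source, target and degree maps of `Σ̃̄`
    (∀ (g : Quot (HRel K B B)) (a : (UC K B).A),
        (UC K B).src (actA K B g a) = actV K B g ((UC K B).src a) ∧
        (UC K B).tgt (actA K B g a) = actV K B g ((UC K B).tgt a) ∧
        (UC K B).deg (actA K B g a) = (UC K B).deg a) ∧
    -- the induced action on 2-cells commutes with `π₂` and with the boundary map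
    (∃ actC : Quot (HRel K B B) → UCCell K B → UCCell K B,
      (∀ g c, (actC g c).1 = c.1) ∧
      (∀ (g : Quot (HRel K B B)) (c : UCCell K B) (w : CWalk (UC K B)),
          Quot.mk _ w = c.2.1 →
          Quot.mk _ (⟨actV K B g w.1, actW K B g w.2⟩ : CWalk (UC K B)) = (actC g c).2.1) ∧
      -- hence the quotient complex `Σ̃̄/𝔤` is defined and `π` induces an isomorphism
      -- of complexes `Σ̃̄/𝔤 ≅ Σ̄`
      ∃ (fV : Quot (fun v v' : (UC K B).V => ∃ g, actV K B g v = v') ≃ S.V)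
        (fA : Quot (fun a a' : (UC K B).A => ∃ g, actA K B g a = a') ≃ S.A)
        (fC : Quot (fun c c' : UCCell K B => ∃ g, actC g c = c') ≃ K.Cell),
        (∀ v : (UC K B).V, fV (Quot.mk _ v) = v.1) ∧
        (∀ a : (UC K B).A, fA (Quot.mk _ a) = a.1) ∧
        (∀ c : UCCell K B, fC (Quot.mk _ c) = c.1) ∧
        (∀ a : (UC K B).A,
            S.src (fA (Quot.mk _ a)) = fV (Quot.mk _ ((UC K B).src a)) ∧
            S.tgt (fA (Quot.mk _ a)) = fV (Quot.mk _ ((UC K B).tgt a)) ∧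
            S.deg (fA (Quot.mk _ a)) = (UC K B).deg a) ∧
        (∀ (c : UCCell K B) (w : CWalk (UC K B)), Quot.mk _ w = c.2.1 →
            K.IsBdry (fC (Quot.mk _ c)) (projCW K B w))) := by
  classical
  have σ : ∀ Y : S.V, Walk S B Y := fun Y => Classical.choice (hconn B Y)
  refine ⟨fun Y ω ωB => rfl, ?_, fun g a => ⟨rfl, act_tgt K B g a, rfl⟩, ?_⟩
  · intro ωB ωB' v
    obtain ⟨Y, q⟩ := v
    induction q using Quot.ind with
    | _ ω =>
      exact congrArg (fun t => (⟨Y, Quot.mk _ t⟩ : (UC K B).V))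
        (Walk.comp_assoc ω ωB ωB')
  · refine ⟨actCell K B, fun g c => rfl, ?_, ?_⟩
    · intro g c w h
      show Quot.mk _ (actCW K B g w) = actQ K B g c.2.1
      rw [← h]
      rfl
    · refine ⟨⟨Quot.lift (fun v => v.1) ?_,
          fun Y => Quot.mk _ (⟨Y, Quot.mk _ (σ Y)⟩ : (UC K B).V), ?_, fun Y => rfl⟩,
        ⟨Quot.lift (fun a => a.1) ?_,
          fun x => Quot.mk _ (⟨x, Quot.mk _ (σ (S.src x))⟩ : (UC K B).A), ?_,
          fun x => rfl⟩,
        ⟨Quot.lift (fun c => c.1) ?_,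
          fun C => Quot.mk _ (stdCell K B σ C), ?_, fun C => rfl⟩,
        fun v => rfl, fun a => rfl, fun c => rfl,
        fun a => ⟨rfl, rfl, rfl⟩, ?_⟩
      · rintro v v' ⟨g, hg⟩
        rw [← hg]
        rfl
      · intro q
        induction q using Quot.ind with
        | _ v =>
          obtain ⟨Y, qv⟩ := v
          induction qv using Quot.ind with
          | _ μ =>
            apply Quot.sound
            refine ⟨Quot.mk _ ((Walk.winv (σ Y)).comp μ), ?_⟩
            exact congrArg (fun t => (⟨Y, t⟩ : (UC K B).V))
              (Quot.sound (cancel_left (σ Y) μ))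
      · rintro a a' ⟨g, hg⟩
        rw [← hg]
        rfl
      · intro q
        induction q using Quot.ind with
        | _ a =>
          obtain ⟨x, qa⟩ := a
          induction qa using Quot.ind with
          | _ μ =>
            apply Quot.sound
            refine ⟨Quot.mk _ ((Walk.winv (σ (S.src x))).comp μ), ?_⟩
            exact congrArg (fun t => (⟨x, t⟩ : (UC K B).A))
              (Quot.sound (cancel_left (σ (S.src x)) μ))
      · rintro c c' ⟨g, hg⟩
        rw [← hg]
        rfl
      · intro q
        induction q using Quot.ind with
        | _ c =>
          obtain ⟨C, θq, hθ⟩ := c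
          apply Quot.sound
          obtain ⟨wrep, hwrep⟩ := Quot.exists_rep θq
          have hθ' : K.IsBdry C (projCW K B wrep) := by
            have h2 := hθ
            rw [← hwrep] at h2
            exact h2
          obtain ⟨w₂, hEq, hproj⟩ := chain_lift K B wrep (K.bdry C)
            (eqvGen_rts (fun h => rotStep_symm h)
              (Relation.EqvGen.symm _ _ hθ'))
          obtain ⟨v₂, θ₂⟩ := w₂
          obtain ⟨V1, q₂⟩ := v₂
          have hproj2 : (⟨V1, projW K B θ₂⟩ : CWalk S) =
              ⟨(K.bdry C).1, (K.bdry C).2⟩ := hproj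
          injection hproj2 with e1 e2
          subst e1
          have ht2 : projW K B θ₂ = (K.bdry C).2 := eq_of_heq e2
          obtain ⟨μ₂, hμ₂⟩ := Quot.exists_rep q₂
          refine ⟨Quot.mk _ ((Walk.winv (σ (K.bdry C).1)).comp μ₂), ?_⟩
          have hg : actV K B (Quot.mk _ ((Walk.winv (σ (K.bdry C).1)).comp μ₂))
              (⟨(K.bdry C).1, Quot.mk _ (σ (K.bdry C).1)⟩ : (UC K B).V) =
              ⟨(K.bdry C).1, q₂⟩ := by
            rw [← hμ₂]
            exact congrArg (fun t => (⟨(K.bdry C).1, t⟩ : (UC K B).V))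
              (Quot.sound (cancel_left (σ (K.bdry C).1) μ₂))
          have hcw : actCW K B (Quot.mk _ ((Walk.winv (σ (K.bdry C).1)).comp μ₂))
              (stdCW K B σ C) = ⟨⟨(K.bdry C).1, q₂⟩, θ₂⟩ := by
            refine cwalk_ext K B _ _ hg ?_
            rw [projCW_actCW]
            show (⟨(K.bdry C).1, projW K B (stdTheta K B σ C)⟩ : CWalk S) =
              ⟨(K.bdry C).1, projW K B θ₂⟩
            rw [stdTheta_proj, ht2]
          refine congrArg (fun t => (⟨C, t⟩ : UCCell K B)) (Subtype.ext ?_)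
          show actQ K B _ (Quot.mk _ (stdCW K B σ C)) = θq
          rw [← hwrep]
          show Quot.mk _ (actCW K B _ (stdCW K B σ C)) = Quot.mk _ wrep
          rw [hcw]
          exact (Quot.eqvGen_sound hEq).symm
      · intro c w h
        have h2 := c.2.2
        rw [← h] at h2
        exact h2
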